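/- Let i ≤ j ≤ k be positive integers and let ρ be an i-polymatroid on a finite set E that is an excluded minor for the class D_k of k-decomposable polymatroids. Then the j-dual of ρ, given by X ↦ j·|X| − ρ(E) + ρ(E−X), is also an excluded minor for D_k, and so is the j-polymatroid ρ^j given by ρ^j(X) = ρ(X) + (j−i)·|X|. -/

import Mathlib

variable {α : Type*}

/-- `ρ` is an (integer) polymatroid on ground set `E`. -/
def IsPolymatroidOn [DecidableEq α] (E : Finset α) (ρ : Finset α → ℤ) : Prop :=
  ρ ∅ = 0 ∧
  (∀ A B : Finset α, A ⊆ B → B ⊆ E → ρ A ≤ ρ B) ∧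
  (∀ A B : Finset α, A ⊆ E → B ⊆ E → ρ (A ∪ B) + ρ (A ∩ B) ≤ ρ A + ρ B)

/-- `r` is the rank function of a matroid on `E` (matroids are exactly the
`1`-polymatroids). -/
def IsMatroidRankOn [DecidableEq α] (E : Finset α) (r : Finset α → ℤ) : Prop :=
  IsPolymatroidOn E r ∧ ∀ e ∈ E, r {e} ≤ 1

/-- `ρ` is a sum of `k` matroid rank functions on `E`. -/
def KDecomposable [DecidableEq α] (k : ℕ) (E : Finset α) (ρ : Finset α → ℤ) : Prop :=
  ∃ M : Fin k → Finset α → ℤ,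
    (∀ i, IsMatroidRankOn E (M i)) ∧ ∀ X ⊆ E, ρ X = ∑ i, M i X

/-- `ρ` (on ground set `E`) is an excluded minor for the class `D_k` of
`k`-decomposable polymatroids: `ρ ∉ D_k`, but every proper minor `(ρ∖A)/B`
(obtained by deleting or contracting at least one element) lies in `D_k`. -/
def ExcludedMinorDk [DecidableEq α] (k : ℕ) (E : Finset α) (ρ : Finset α → ℤ) : Prop :=
  ¬ KDecomposable k E ρ ∧
  ∀ A B : Finset α, A ⊆ E → B ⊆ E → Disjoint A B → (A ∪ B).Nonempty →
    KDecomposable k (E \ (A ∪ B)) (fun X => ρ (X ∪ B) - ρ B)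

section Helpers
variable [DecidableEq α] {E : Finset α} {ρ σ τ : Finset α → ℤ} {k : ℕ}

lemma kdec_congr (h : ∀ X ⊆ E, σ X = τ X) (hτ : KDecomposable k E τ) :
    KDecomposable k E σ := by
  obtain ⟨M, hM, hsum⟩ := hτ
  exact ⟨M, hM, fun X hX => (h X hX).trans (hsum X hX)⟩

lemma poly_nonneg (hρ : IsPolymatroidOn E ρ) {X : Finset α} (hX : X ⊆ E) : 0 ≤ ρ X := by
  have := hρ.2.1 ∅ X (Finset.empty_subset X) hX
  rw [hρ.1] at this; exact this

lemma poly_add_card (hρ : IsPolymatroidOn E ρ) (c : ℤ) (hc : 0 ≤ c) :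
    IsPolymatroidOn E (fun X => ρ X + c * X.card) := by
  obtain ⟨h0, hmono, hsub⟩ := hρ
  refine ⟨by simp [h0], ?_, ?_⟩
  · intro A B hAB hBE
    have h1 := hmono A B hAB hBE
    have h2 : (A.card : ℤ) ≤ B.card := by exact_mod_cast Finset.card_le_card hAB
    have h3 := mul_le_mul_of_nonneg_left h2 hc
    simp only []
    linarith
  · intro A B hA hB
    have h1 := hsub A B hA hB
    have h2 : ((A ∪ B).card : ℤ) + (A ∩ B).card = A.card + B.card := by
      exact_mod_cast Finset.card_union_add_card_inter A B
    have h3 : c * (((A ∪ B).card : ℤ) + (A ∩ B).card) = c * (A.card + B.card) := by rw [h2]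
    simp only []
    linarith [h3]

lemma poly_union_le (hρ : IsPolymatroidOn E ρ) (m : ℤ) (hm : ∀ e ∈ E, ρ {e} ≤ m) :
    ∀ Z Y : Finset α, Y ∪ Z ⊆ E → ρ (Y ∪ Z) ≤ ρ Y + m * Z.card := by
  intro Z
  induction Z using Finset.induction_on with
  | empty => intro Y h; simp
  | @insert z Z hz ih =>
    intro Y h
    have hsub : Y ∪ Z ⊆ E := by
      refine subset_trans ?_ h
      intro x hx; simp only [Finset.mem_union, Finset.mem_insert] at *; tauto
    have hzE : z ∈ E := h (by simp)
    have key := hρ.2.2 (Y ∪ Z) {z} hsub (by simpa using hzE)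
    have hnn : 0 ≤ ρ ((Y ∪ Z) ∩ {z}) :=
      poly_nonneg hρ (subset_trans (Finset.inter_subset_left) hsub)
    have hins : Y ∪ insert z Z = (Y ∪ Z) ∪ {z} := by
      ext x; simp [Finset.mem_union, Finset.mem_insert]
    have hcard : ((insert z Z).card : ℤ) = Z.card + 1 := by
      rw [Finset.card_insert_of_notMem hz]; push_cast; ring
    have hz1 := hm z hzE
    have := ih Y hsub
    rw [hins, hcard]
    linarith


lemma card_sdiff_int {X : Finset α} (hX : X ⊆ E) : ((E \ X).card : ℤ) = E.card - X.card := by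
  rw [Finset.card_sdiff_of_subset hX]
  have := Finset.card_le_card hX
  push_cast [Nat.cast_sub this]
  ring

lemma dual_poly (hρ : IsPolymatroidOn E ρ) (m : ℤ) (hm : ∀ e ∈ E, ρ {e} ≤ m) :
    IsPolymatroidOn E (fun X => m * X.card - ρ E + ρ (E \ X)) ∧
    (∀ e ∈ E, m * (({e} : Finset α).card : ℤ) - ρ E + ρ (E \ {e}) ≤ m) := by
  constructor
  · refine ⟨by simp, ?_, ?_⟩
    · intro A B hAB hBE
      simp only []
      have h1 : (E \ B) ∪ (B \ A) = E \ A := by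
        ext x
        simp only [Finset.mem_union, Finset.mem_sdiff]
        have := @hAB x; have := @hBE x
        tauto
      have h2 : ((B \ A).card : ℤ) = B.card - A.card := by
        rw [Finset.card_sdiff_of_subset hAB]
        have := Finset.card_le_card hAB
        push_cast [Nat.cast_sub this]; ring
      have h3 : (E \ B) ∪ (B \ A) ⊆ E := by
        rw [h1]; exact Finset.sdiff_subset
      have := poly_union_le hρ m hm (B \ A) (E \ B) h3
      rw [h1, h2] at this
      linarith
    · intro A B hA hB
      simp only []
      have h1 : E \ (A ∪ B) = (E \ A) ∩ (E \ B) := by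
        ext x; simp only [Finset.mem_union, Finset.mem_sdiff, Finset.mem_inter]; tauto
      have h2 : E \ (A ∩ B) = (E \ A) ∪ (E \ B) := by
        ext x; simp only [Finset.mem_union, Finset.mem_sdiff, Finset.mem_inter]; tauto
      have h3 := hρ.2.2 (E \ A) (E \ B) Finset.sdiff_subset Finset.sdiff_subset
      have h4 : ((A ∪ B).card : ℤ) + (A ∩ B).card = A.card + B.card := by
        exact_mod_cast Finset.card_union_add_card_inter A B
      have h5 : m * (((A ∪ B).card : ℤ)) + m * ((A ∩ B).card : ℤ)
          = m * (A.card : ℤ) + m * (B.card : ℤ) := by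
        rw [← mul_add, ← mul_add, h4]
      rw [h1, h2]
      linarith
  · intro e he
    have h1 : E \ {e} ⊆ E := Finset.sdiff_subset
    have h2 := hρ.2.1 (E \ {e}) E h1 subset_rfl
    simp only [Finset.card_singleton]
    push_cast
    linarith

lemma dual_invol (hρ : IsPolymatroidOn E ρ) (m : ℤ) {X : Finset α} (hX : X ⊆ E) :
    m * (X.card : ℤ) - (m * (E.card : ℤ) - ρ E + ρ (E \ E)) +
      (m * (((E \ X).card : ℤ)) - ρ E + ρ (E \ (E \ X))) = ρ X := by
  rw [Finset.sdiff_self, Finset.sdiff_sdiff_eq_self hX, hρ.1]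
  rw [card_sdiff_int hX]
  ring

lemma matroid_step_le (hr : IsMatroidRankOn E r) {X : Finset α} {e : α}
    (he : e ∈ X) (hX : X ⊆ E) : r X ≤ r (X.erase e) + 1 := by
  have heE : e ∈ E := hX he
  have h1 := hr.1.2.2 (X.erase e) {e} (subset_trans (Finset.erase_subset e X) hX)
    (by simpa using heE)
  have h2 : X.erase e ∪ {e} = X := by
    ext x; simp only [Finset.mem_union, Finset.mem_erase, Finset.mem_singleton]
    constructor
    · rintro (⟨_, hx⟩ | rfl) <;> [exact hx; exact he]
    · intro hx; by_cases hxe : x = e <;> tauto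
  have h3 : X.erase e ∩ {e} = ∅ := by
    ext x; simp only [Finset.mem_inter, Finset.mem_erase, Finset.mem_singleton]
    tauto
  rw [h2, h3, hr.1.1] at h1
  have h4 := hr.2 e heE
  linarith

lemma coloop_step (hr : IsMatroidRankOn E r) {X : Finset α} {e : α}
    (he : e ∈ X) (hX : X ⊆ E) (hco : r (E.erase e) + 1 ≤ r E) :
    r X = r (X.erase e) + 1 := by
  have heE : e ∈ E := hX he
  have h1 := hr.1.2.2 X (E.erase e) hX (Finset.erase_subset e E)
  have h2 : X ∪ E.erase e = E := by
    ext x; simp only [Finset.mem_union, Finset.mem_erase]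
    have := @hX x
    constructor
    · tauto
    · intro hx; by_cases hxe : x = e
      · left; rw [hxe]; exact he
      · tauto
  have h3 : X ∩ E.erase e = X.erase e := by
    ext x; simp only [Finset.mem_inter, Finset.mem_erase]
    have := @hX x; tauto
  rw [h2, h3] at h1
  have h4 := matroid_step_le hr he hX
  omega

lemma coloop_removal (hr : IsMatroidRankOn E r) (C : Finset α) :
    ∀ X : Finset α, X ⊆ E → C ⊆ X → (∀ e ∈ C, r (E.erase e) + 1 ≤ r E) →
      r X = r (X \ C) + C.card := by
  induction C using Finset.induction_on with
  | empty => intro X _ _ _; simp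
  | @insert e C he ih =>
    intro X hXE hCX hco
    have heX : e ∈ X := hCX (Finset.mem_insert_self e C)
    have h1 := coloop_step hr heX hXE (hco e (Finset.mem_insert_self e C))
    have h2 := ih (X.erase e) (subset_trans (Finset.erase_subset e X) hXE)
      (by
        intro x hx
        simp only [Finset.mem_erase]
        have hxC : x ∈ insert e C := Finset.mem_insert_of_mem hx
        exact ⟨fun hxe => he (hxe ▸ hx), hCX hxC⟩)
      (fun x hx => hco x (Finset.mem_insert_of_mem hx))
    have h3 : X.erase e \ C = X \ insert e C := by
      ext x
      simp only [Finset.mem_sdiff, Finset.mem_erase, Finset.mem_insert]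
      tauto
    have h4 : ((insert e C).card : ℤ) = C.card + 1 := by
      rw [Finset.card_insert_of_notMem he]; push_cast; ring
    rw [h1, h2, h3, h4]
    ring


lemma lemB1 (hσ : IsPolymatroidOn E σ) (M : Fin k → Finset α → ℤ)
    (hM : ∀ t, IsMatroidRankOn E (M t))
    (heq : ∀ X ⊆ E, σ X + (X.card : ℤ) = ∑ t, M t X) :
    KDecomposable k E σ := by
  classical
  set P : α → Prop := fun e => ∃ t : Fin k, M t (E.erase e) + 1 ≤ M t E with hP
  have hfP : ∀ e ∈ E, P e := by
    intro e he
    by_contra hc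
    rw [hP] at hc
    have hall : ∀ t : Fin k, M t E ≤ M t (E.erase e) := by
      intro t
      by_contra h2
      exact hc ⟨t, by linarith⟩
    have hsum1 := heq E subset_rfl
    have hsum2 := heq (E.erase e) (Finset.erase_subset e E)
    have hcard : ((E.erase e).card : ℤ) = E.card - 1 := by
      rw [Finset.card_erase_of_mem he]
      have : 1 ≤ E.card := Finset.card_pos.mpr ⟨e, he⟩
      push_cast [Nat.cast_sub this]; ring
    have hmono := hσ.2.1 (E.erase e) E (Finset.erase_subset e E) subset_rfl
    have hle : ∑ t : Fin k, M t E ≤ ∑ t : Fin k, M t (E.erase e) :=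
      Finset.sum_le_sum (fun t _ => hall t)
    rw [hcard] at hsum2
    linarith
  set f : α → ℕ := fun e => if h : P e then (h.choose : ℕ) else 0 with hf
  have hfspec : ∀ e ∈ E, ∀ t : Fin k, f e = (t : ℕ) → M t (E.erase e) + 1 ≤ M t E := by
    intro e he t ht
    have hPe := hfP e he
    have : f e = (hPe.choose : ℕ) := by rw [hf]; simp [hPe]
    have htt : (hPe.choose : Fin k) = t := by
      apply Fin.ext; rw [← ht, this]
    rw [← htt]
    exact hPe.choose_spec
  have hflt : ∀ e ∈ E, f e < k := by
    intro e he
    have hPe := hfP e he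
    have : f e = (hPe.choose : ℕ) := by rw [hf]; simp [hPe]
    rw [this]; exact hPe.choose.isLt
  refine ⟨fun t X => M t (X.filter (fun e => ¬ f e = (t : ℕ))), ?_, ?_⟩
  · intro t
    obtain ⟨⟨h0, hmono, hsub⟩, hsing⟩ := hM t
    refine ⟨⟨by simp [h0], ?_, ?_⟩, ?_⟩
    · intro A B hAB hBE
      exact hmono _ _ (Finset.filter_subset_filter _ hAB)
        (subset_trans (Finset.filter_subset _ _) hBE)
    · intro A B hA hB
      have hu : (A ∪ B).filter (fun e => ¬ f e = (t : ℕ))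
          = A.filter (fun e => ¬ f e = (t : ℕ)) ∪ B.filter (fun e => ¬ f e = (t : ℕ)) :=
        Finset.filter_union _ _ _
      have hi : (A ∩ B).filter (fun e => ¬ f e = (t : ℕ))
          = A.filter (fun e => ¬ f e = (t : ℕ)) ∩ B.filter (fun e => ¬ f e = (t : ℕ)) := by
        ext x; simp only [Finset.mem_filter, Finset.mem_inter]; tauto
      simp only []
      rw [hu, hi]
      exact hsub _ _ (subset_trans (Finset.filter_subset _ _) hA)
        (subset_trans (Finset.filter_subset _ _) hB)
    · intro e he
      simp only []
      have h1 := hmono (({e} : Finset α).filter (fun e => ¬ f e = (t : ℕ))) {e}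
        (Finset.filter_subset _ _) (by simpa using he)
      have h2 := hsing e he
      linarith
  · intro X hX
    have key : ∀ t : Fin k,
        M t X = M t (X.filter (fun e => ¬ f e = (t : ℕ)))
          + ((X.filter (fun e => f e = (t : ℕ))).card : ℤ) := by
      intro t
      have hC : X.filter (fun e => f e = (t : ℕ)) ⊆ X := Finset.filter_subset _ _
      have hdiff : X \ (X.filter (fun e => f e = (t : ℕ)))
          = X.filter (fun e => ¬ f e = (t : ℕ)) := by
        ext x; simp only [Finset.mem_sdiff, Finset.mem_filter]; tauto
      have := coloop_removal (hM t) (X.filter (fun e => f e = (t : ℕ))) X hX hC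
        (by
          intro e heC
          simp only [Finset.mem_filter] at heC
          exact hfspec e (hX heC.1) t heC.2)
      rw [hdiff] at this
      linarith [this]
    have hcards : ∑ t : Fin k, ((X.filter (fun e => f e = (t : ℕ))).card : ℤ)
        = (X.card : ℤ) := by
      have : ∀ t : Fin k, ((X.filter (fun e => f e = (t : ℕ))).card : ℤ)
          = ∑ e ∈ X, (if f e = (t : ℕ) then (1 : ℤ) else 0) := by
        intro t
        rw [Finset.card_filter]
        push_cast
        rfl
      rw [Finset.sum_congr rfl (fun t _ => this t), Finset.sum_comm]
      have inner : ∀ e ∈ X, ∑ t : Fin k, (if f e = (t : ℕ) then (1 : ℤ) else 0) = 1 := by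
        intro e he
        have hlt := hflt e (hX he)
        have step : ∀ t : Fin k, t ∈ (Finset.univ : Finset (Fin k)) →
            (if f e = (t : ℕ) then (1 : ℤ) else 0)
            = (if t = (⟨f e, hlt⟩ : Fin k) then (1 : ℤ) else 0) := by
          intro t _
          by_cases h : f e = (t : ℕ)
          · rw [if_pos h, if_pos (by apply Fin.ext; simp [← h])]
          · rw [if_neg h, if_neg (by intro hh; apply h; rw [hh])]
        rw [Finset.sum_congr rfl step]
        simp
      rw [Finset.sum_congr rfl inner]
      simp [mul_comm]
    have hsum := heq X hX
    calc σ X = (∑ t, M t X) - (X.card : ℤ) := by linarith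
    _ = ∑ t, M t (X.filter (fun e => ¬ f e = (t : ℕ))) := by
        rw [Finset.sum_congr rfl (fun t _ => key t), Finset.sum_add_distrib, hcards]
        ring

lemma lemB (hσ : IsPolymatroidOn E σ) (c : ℕ)
    (h : KDecomposable k E (fun X => σ X + (c : ℤ) * X.card)) : KDecomposable k E σ := by
  induction c with
  | zero => exact kdec_congr (fun X _ => by simp) h
  | succ c ih =>
    apply ih
    have hσ' := poly_add_card hσ (c : ℤ) (by positivity)
    obtain ⟨M, hM, hsum⟩ := h
    exact lemB1 hσ' M hM (fun X hX => by
      have := hsum X hX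
      simp only [] at this ⊢
      push_cast at this ⊢
      linarith)

lemma lemD (hσ : IsPolymatroidOn E σ) (m : ℕ) (hm : ∀ e ∈ E, σ {e} ≤ (m : ℤ)) (hmk : m ≤ k)
    (h : KDecomposable k E σ) :
    KDecomposable k E (fun X => (m : ℤ) * X.card - σ E + σ (E \ X)) := by
  obtain ⟨M, hM, hsum⟩ := h
  have hg : IsPolymatroidOn E (fun X => (m : ℤ) * X.card - σ E + σ (E \ X)) :=
    (dual_poly hσ (m : ℤ) hm).1
  apply lemB hg (k - m)
  refine ⟨fun t X => (1 : ℤ) * X.card - M t E + M t (E \ X), ?_, ?_⟩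
  · intro t
    have := dual_poly (hM t).1 1 (hM t).2
    refine ⟨this.1, ?_⟩
    intro e he
    exact this.2 e he
  · intro X hX
    have h1 := hsum E subset_rfl
    have h2 := hsum (E \ X) Finset.sdiff_subset
    have h3 : ∑ t : Fin k, ((1 : ℤ) * X.card - M t E + M t (E \ X))
        = k * (X.card : ℤ) - (∑ t, M t E) + ∑ t, M t (E \ X) := by
      rw [Finset.sum_add_distrib, Finset.sum_sub_distrib, Finset.sum_const,
        Finset.card_univ, Fintype.card_fin, nsmul_eq_mul]
      ring
    have hk : ((k - m : ℕ) : ℤ) = (k : ℤ) - m := by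
      push_cast [Nat.cast_sub hmk]; ring
    simp only []
    rw [h3, hk]
    linarith


lemma minor_poly (hρ : IsPolymatroidOn E ρ) {B E' : Finset α} (hB : B ⊆ E) (hE' : E' ⊆ E \ B) :
    IsPolymatroidOn E' (fun X => ρ (X ∪ B) - ρ B) ∧
    (∀ e ∈ E', ρ ({e} ∪ B) - ρ B ≤ ρ {e}) := by
  have hE'E : E' ⊆ E := subset_trans hE' Finset.sdiff_subset
  constructor
  · refine ⟨?_, ?_, ?_⟩
    · simp only [Finset.empty_union]; ring
    · intro A' B' hAB hBE
      simp only []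
      have h1 : A' ∪ B ⊆ B' ∪ B := Finset.union_subset_union_left hAB
      have h2 : B' ∪ B ⊆ E := Finset.union_subset (subset_trans hBE hE'E) hB
      have := hρ.2.1 (A' ∪ B) (B' ∪ B) h1 h2
      linarith
    · intro A' B' hA' hB'
      simp only []
      have hAE : A' ∪ B ⊆ E := Finset.union_subset (subset_trans hA' hE'E) hB
      have hBE : B' ∪ B ⊆ E := Finset.union_subset (subset_trans hB' hE'E) hB
      have h := hρ.2.2 (A' ∪ B) (B' ∪ B) hAE hBE
      have h1 : (A' ∪ B) ∪ (B' ∪ B) = (A' ∪ B') ∪ B := by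
        ext x; simp only [Finset.mem_union]; tauto
      have h2 : (A' ∪ B) ∩ (B' ∪ B) = (A' ∩ B') ∪ B := by
        ext x; simp only [Finset.mem_union, Finset.mem_inter]; tauto
      rw [h1, h2] at h
      linarith
  · intro e he
    have heB : e ∉ B := (Finset.mem_sdiff.mp (hE' he)).2
    have heE : e ∈ E := hE'E he
    have h := hρ.2.2 {e} B (by simpa using heE) hB
    have h2 : ({e} : Finset α) ∩ B = ∅ := by
      ext x; simp only [Finset.mem_inter, Finset.mem_singleton, Finset.notMem_empty,
        iff_false, not_and]
      rintro rfl; exact heB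
    rw [h2, hρ.1] at h
    linarith

end Helpers

theorem stmt13 [DecidableEq α] (E : Finset α) (i j k : ℕ)
    (hi : 0 < i) (hij : i ≤ j) (hjk : j ≤ k)
    (ρ : Finset α → ℤ)
    (hρ : IsPolymatroidOn E ρ) (hpi : ∀ e ∈ E, ρ {e} ≤ (i : ℤ))
    (hem : ExcludedMinorDk k E ρ) :
    ExcludedMinorDk k E (fun X => (j : ℤ) * X.card - ρ E + ρ (E \ X)) ∧
    ExcludedMinorDk k E (fun X => ρ X + ((j : ℤ) - (i : ℤ)) * X.card) := by
  have hij' : (i : ℤ) ≤ (j : ℤ) := by exact_mod_cast hij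
  have hpj : ∀ e ∈ E, ρ {e} ≤ (j : ℤ) := fun e he => (hpi e he).trans hij'
  obtain ⟨hnd, hmin⟩ := hem
  have hik : i ≤ k := hij.trans hjk
  constructor
  · constructor
    · -- the dual is not k-decomposable
      intro h
      apply hnd
      have hgd := dual_poly hρ (j : ℤ) hpj
      have h2 := lemD hgd.1 j (fun e he => hgd.2 e he) hjk h
      refine kdec_congr (fun X hX => ?_) h2
      have := dual_invol hρ (j : ℤ) hX
      linarith
    · -- minors of the dual
      intro A B hA hB hAB hne
      have hBA := hmin B A hB hA hAB.symm (by rwa [Finset.union_comm])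
      have hE'eq : E \ (B ∪ A) = E \ (A ∪ B) := by rw [Finset.union_comm]
      rw [hE'eq] at hBA
      set E' := E \ (A ∪ B) with hE'
      have hE'A : E' ⊆ E \ A := by
        intro x hx
        simp only [hE', Finset.mem_sdiff, Finset.mem_union] at hx ⊢
        tauto
      have hτ := minor_poly hρ hA hE'A
      have hsing : ∀ e ∈ E', ρ ({e} ∪ A) - ρ A ≤ (j : ℤ) := by
        intro e he
        have h1 := hτ.2 e he
        have h2 := hpj e (subset_trans hE'A Finset.sdiff_subset he)
        linarith
      have hdual := lemD hτ.1 j hsing hjk hBA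
      refine kdec_congr (fun X hX => ?_) hdual
      simp only []
      -- set identities
      have hXE' : ∀ x ∈ X, x ∈ E ∧ x ∉ A ∧ x ∉ B := by
        intro x hx
        have := hX hx
        simp only [hE', Finset.mem_sdiff, Finset.mem_union] at this
        tauto
      have hb : E' ∪ A = E \ B := by
        ext x
        simp only [hE', Finset.mem_union, Finset.mem_sdiff]
        have h1 := @hA x
        have h2 : x ∈ A → x ∉ B := fun hx => Finset.disjoint_left.mp hAB hx
        tauto
      have hc : (E' \ X) ∪ A = E \ (X ∪ B) := by
        ext x
        simp only [hE', Finset.mem_union, Finset.mem_sdiff]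
        have h1 := @hA x
        have h2 : x ∈ A → x ∉ B := fun hx => Finset.disjoint_left.mp hAB hx
        have h3 := @hXE' x
        tauto
      have hcard : ((X ∪ B).card : ℤ) = X.card + B.card := by
        rw [Finset.card_union_of_disjoint (by
          rw [Finset.disjoint_left]; intro x hx; exact (hXE' x hx).2.2)]
        push_cast; ring
      rw [hb, hc, hcard]
      ring
  · constructor
    · intro h
      apply hnd
      have hcast : ((j - i : ℕ) : ℤ) = (j : ℤ) - (i : ℤ) := by
        push_cast [Nat.cast_sub hij]; ring
      apply lemB hρ (j - i)
      refine kdec_congr (fun X hX => ?_) h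
      simp only [hcast]
    · intro A B hA hB hAB hne
      have hkd := hmin A B hA hB hAB hne
      set E' := E \ (A ∪ B) with hE'
      have hE'B : E' ⊆ E \ B := by
        intro x hx
        simp only [hE', Finset.mem_sdiff, Finset.mem_union] at hx ⊢
        tauto
      have hτ := minor_poly hρ hB hE'B
      have hsingi : ∀ e ∈ E', ρ ({e} ∪ B) - ρ B ≤ (i : ℤ) := by
        intro e he
        have h1 := hτ.2 e he
        have h2 := hpi e (subset_trans hE'B Finset.sdiff_subset he)
        linarith
      have d1 := lemD hτ.1 i hsingi hik hkd
      have hδ := dual_poly hτ.1 (i : ℤ) hsingi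
      have hsingj : ∀ e ∈ E',
          (i : ℤ) * (({e} : Finset α).card : ℤ) - (ρ (E' ∪ B) - ρ B) + (ρ ((E' \ {e}) ∪ B) - ρ B)
            ≤ (j : ℤ) := by
        intro e he
        have := hδ.2 e he
        linarith
      have d2 := lemD hδ.1 j (fun e he => by
        have := hδ.2 e he
        linarith) hjk d1
      refine kdec_congr (fun X hX => ?_) d2
      simp only []
      have he1 : E' \ E' = (∅ : Finset α) := Finset.sdiff_self E'
      have he2 : E' \ (E' \ X) = X := Finset.sdiff_sdiff_eq_self hX
      have hcard1 : ((E' \ X).card : ℤ) = E'.card - X.card := card_sdiff_int hX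
      have hcard2 : ((X ∪ B).card : ℤ) = X.card + B.card := by
        rw [Finset.card_union_of_disjoint (by
          rw [Finset.disjoint_left]; intro x hx
          have := hE'B (hX hx)
          simp only [Finset.mem_sdiff] at this
          exact this.2)]
        push_cast; ring
      have hemp : (∅ : Finset α) ∪ B = B := Finset.empty_union B
      rw [he1, he2, hcard1, hcard2, hemp]
      ring
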